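/- Let E be a nonzero reflexive Banach space, B := E × E* with q(x,x*) := ⟨x,x*⟩, and f ∈ PC(E × E*) be a BC-function. Then P_q(f) is a maximally monotone subset of E × E*, P_q(f^@) = P_q(f), and P_q(f) − G(−J) = E × E*, where J is the duality map. -/

import Mathlib

open scoped Pointwise

noncomputable section

variable {E : Type*} [NormedAddCommGroup E] [NormedSpace ℝ E]

/-- `E` is reflexive: the canonical map into the double dual is surjective. -/
def ReflexiveSp (E : Type*) [NormedAddCommGroup E] [NormedSpace ℝ E] : Prop :=
  Function.Surjective (NormedSpace.inclusionInDoubleDual ℝ E)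

/-- The SSD pairing `⌊(x,x*),(y,y*)⌋ = ⟨x,y*⟩ + ⟨y,x*⟩` on `E × E*`. -/
def pairP (p r : E × StrongDual ℝ E) : ℝ := r.2 p.1 + p.2 r.1

/-- `q(x,x*) = ⟨x,x*⟩`. -/
def qP (p : E × StrongDual ℝ E) : ℝ := p.2 p.1

/-- The intrinsic conjugate `f^@(c) = sup_b (⌊b,c⌋ - f(b))` on `E × E*`. -/
def conjP (f : E × StrongDual ℝ E → EReal) (c : E × StrongDual ℝ E) : EReal :=
  ⨆ b : E × StrongDual ℝ E, ((pairP b c : ℝ) : EReal) - f b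

/-- A proper function into `(-∞,∞]`: never `⊥` and somewhere finite. -/
def ProperFnP (f : E × StrongDual ℝ E → EReal) : Prop :=
  (∀ p, f p ≠ ⊥) ∧ ∃ p, f p ≠ ⊤

/-- Convexity for `(-∞,∞]`-valued functions on `E × E*`. -/
def ConvexFnP (f : E × StrongDual ℝ E → EReal) : Prop :=
  ∀ p r : E × StrongDual ℝ E, ∀ t : ℝ, 0 ≤ t → t ≤ 1 →
    f (t • p + (1 - t) • r) ≤ (t : EReal) * f p + ((1 - t : ℝ) : EReal) * f r

/-- `P_q(f) = {b : f(b) = q(b)}`. -/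
def PqP (f : E × StrongDual ℝ E → EReal) : Set (E × StrongDual ℝ E) :=
  {p | f p = ((qP p : ℝ) : EReal)}

/-- `f` is a BC-function: `f^@(b) ≥ f(b) ≥ q(b)` for all `b`. -/
def IsBCP (f : E × StrongDual ℝ E → EReal) : Prop :=
  ∀ p : E × StrongDual ℝ E, ((qP p : ℝ) : EReal) ≤ f p ∧ f p ≤ conjP f p

/-- The effective domain of an `EReal`-valued function on `E × E*`. -/
def domP (f : E × StrongDual ℝ E → EReal) : Set (E × StrongDual ℝ E) :=
  {p | ∃ r : ℝ, f p = (r : EReal)}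

/-- A monotone subset of `E × E*`. -/
def MonoSet (A : Set (E × StrongDual ℝ E)) : Prop :=
  ∀ p ∈ A, ∀ r ∈ A, 0 ≤ (p.2 - r.2) (p.1 - r.1)

/-- A maximally monotone subset of `E × E*`. -/
def MaxMono (A : Set (E × StrongDual ℝ E)) : Prop :=
  A.Nonempty ∧ MonoSet A ∧ ∀ C : Set (E × StrongDual ℝ E), MonoSet C → A ⊆ C → C = A

/-- `G(-J) = {(x,x*) : ½‖x‖² + ½‖x*‖² = -⟨x,x*⟩}` where `J` is the duality map. -/
def GnegJ (E : Type*) [NormedAddCommGroup E] [NormedSpace ℝ E] :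
    Set (E × StrongDual ℝ E) :=
  {p | (1 / 2) * ‖p.1‖ ^ 2 + (1 / 2) * ‖p.2‖ ^ 2 = -(p.2 p.1)}

/-- The graph of a multifunction `S : E ⇉ E*`. -/
def graphOf (S : E → Set (StrongDual ℝ E)) : Set (E × StrongDual ℝ E) :=
  {p | p.2 ∈ S p.1}

/-- `S : E ⇉ E*` is maximally monotone. -/
def MaxMonoOp (S : E → Set (StrongDual ℝ E)) : Prop := MaxMono (graphOf S)

/-- The Fitzpatrick function of a multifunction `S : E ⇉ E*`:
`φ_S(x,x*) = sup_{(s,s*) ∈ G(S)} (⟨x,s*⟩ + ⟨s,x*⟩ - ⟨s,s*⟩)`. -/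
def fitz (S : E → Set (StrongDual ℝ E)) (p : E × StrongDual ℝ E) : EReal :=
  ⨆ s : graphOf S,
    (((s : E × StrongDual ℝ E).2 p.1 + p.2 (s : E × StrongDual ℝ E).1
      - (s : E × StrongDual ℝ E).2 (s : E × StrongDual ℝ E).1 : ℝ) : EReal)

/-- The domain `D(S) = {x : Sx ≠ ∅}` of a multifunction. -/
def domOp (S : E → Set (StrongDual ℝ E)) : Set E := {x | (S x).Nonempty}


namespace Stmt12Aux
lemma amgm (d : E × StrongDual ℝ E) :
    0 ≤ d.2 d.1 + ((1 / 2) * ‖d.1‖ ^ 2 + (1 / 2) * ‖d.2‖ ^ 2) := by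
  have h := d.2.le_opNorm d.1
  rw [Real.norm_eq_abs] at h
  have h1 := (abs_le.mp h).1
  nlinarith [sq_nonneg (‖d.1‖ - ‖d.2‖), norm_nonneg d.1, norm_nonneg d.2]

lemma normsq_combo {V : Type*} [SeminormedAddCommGroup V] [NormedSpace ℝ V]
    (u v : V) {a a' : ℝ} (ha : 0 ≤ a) (ha' : 0 ≤ a') (hab : a + a' = 1) :
    ‖a • u + a' • v‖ ^ 2 ≤ a * ‖u‖ ^ 2 + a' * ‖v‖ ^ 2 := by
  have h1 : ‖a • u + a' • v‖ ≤ a * ‖u‖ + a' * ‖v‖ := by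
    refine le_trans (norm_add_le _ _) ?_
    rw [norm_smul, norm_smul, Real.norm_eq_abs, Real.norm_eq_abs,
      abs_of_nonneg ha, abs_of_nonneg ha']
  have h2 : (0:ℝ) ≤ ‖a • u + a' • v‖ := norm_nonneg _
  nlinarith [mul_self_le_mul_self h2 h1, mul_nonneg (mul_nonneg ha ha') (sq_nonneg (‖u‖ - ‖v‖)),
    norm_nonneg u, norm_nonneg v]

set_option maxHeartbeats 1000000 in
set_option maxHeartbeats 1000000 in
lemma sup_est (c : E × StrongDual ℝ E) (K : ℝ)
    (h : ∀ d : E × StrongDual ℝ E,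
      c.2 d.1 + d.2 c.1 - ((1 / 2) * ‖d.1‖ ^ 2 + (1 / 2) * ‖d.2‖ ^ 2) ≤ K) :
    (1 / 2) * ‖c.1‖ ^ 2 + (1 / 2) * ‖c.2‖ ^ 2 ≤ K := by
  have main : ∀ ε : ℝ, 0 < ε → (1 / 2) * ‖c.1‖ ^ 2 + (1 / 2) * ‖c.2‖ ^ 2 ≤ K + ε := by
    intro ε hε
    have hpos : (0:ℝ) < ‖c.2‖ + 1 := by positivity
    set ε₀ : ℝ := ε / (‖c.2‖ + 1) with hε₀def
    have hε₀ : 0 < ε₀ := by positivity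
    obtain ⟨u, hu1, hu2⟩ : ∃ u : E, ‖u‖ ≤ 1 ∧ ‖c.2‖ - ε₀ ≤ c.2 u := by
      rcases lt_or_ge (‖c.2‖ - ε₀) 0 with hh | hh
      · exact ⟨0, by simp, by simpa using hh.le⟩
      · obtain ⟨x, hx1, hx2⟩ :=
          c.2.exists_lt_apply_of_lt_opNorm (show ‖c.2‖ - ε₀ < ‖c.2‖ by linarith)
        rcases le_or_gt 0 (c.2 x) with hs | hs
        · refine ⟨x, hx1.le, ?_⟩
          rw [Real.norm_eq_abs, abs_of_nonneg hs] at hx2; linarith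
        · refine ⟨-x, by rw [norm_neg]; exact hx1.le, ?_⟩
          rw [Real.norm_eq_abs, abs_of_neg hs] at hx2
          rw [map_neg]; linarith
    obtain ⟨v, hv1, hv2'⟩ := exists_dual_vector'' ℝ c.1
    have hv2 : v c.1 = ‖c.1‖ := by exact_mod_cast hv2'
    have hd := h (‖c.2‖ • u, ‖c.1‖ • v)
    simp only [map_smul, ContinuousLinearMap.smul_apply, smul_eq_mul, norm_smul,
      Real.norm_eq_abs, abs_of_nonneg (norm_nonneg _)] at hd
    rw [hv2] at hd
    have hu2' : ‖u‖ ^ 2 ≤ 1 := by nlinarith [norm_nonneg u]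
    have hv2'' : ‖v‖ ^ 2 ≤ 1 := by nlinarith [norm_nonneg v]
    have hb1 : (‖c.2‖ * ‖u‖) ^ 2 ≤ ‖c.2‖ ^ 2 := by nlinarith [sq_nonneg ‖c.2‖, hu2']
    have hb2 : (‖c.1‖ * ‖v‖) ^ 2 ≤ ‖c.1‖ ^ 2 := by nlinarith [sq_nonneg ‖c.1‖, hv2'']
    have hb3 : ‖c.2‖ * (‖c.2‖ - ε₀) ≤ ‖c.2‖ * c.2 u :=
      mul_le_mul_of_nonneg_left hu2 (norm_nonneg c.2)
    have hb4 : ε₀ * ‖c.2‖ ≤ ε := by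
      rw [hε₀def, div_mul_eq_mul_div, div_le_iff₀ hpos]
      nlinarith [norm_nonneg c.2, hε.le]
    nlinarith [hd, hb1, hb2, hb3, hb4]
  by_contra hK
  push_neg at hK
  have := main (((1 / 2) * ‖c.1‖ ^ 2 + (1 / 2) * ‖c.2‖ ^ 2 - K) / 2) (by linarith)
  linarith

lemma keyIneq (f : E × StrongDual ℝ E → EReal)
    (hq : ∀ p, ((qP p : ℝ) : EReal) ≤ f p) (hconv : ConvexFnP f)
    {b : E × StrongDual ℝ E} (hb : f b = ((qP b : ℝ) : EReal))
    (c : E × StrongDual ℝ E) (r : ℝ) (hc : f c = (r : EReal)) :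
    pairP c b ≤ r + qP b := by
  have step : ∀ t : ℝ, 0 < t → t < 1 →
      pairP c b - qP b - r ≤ t * (pairP c b - qP b - qP c) := by
    intro t ht0 ht1
    have h1 := hconv c b t ht0.le ht1.le
    rw [hc, hb] at h1
    have h3 : ((qP (t • c + (1 - t) • b) : ℝ) : EReal)
        ≤ ((t * r + (1 - t) * qP b : ℝ) : EReal) := by
      refine le_trans (hq _) (le_trans h1 ?_)
      rw [EReal.coe_add, EReal.coe_mul, EReal.coe_mul]
    have h4 : qP (t • c + (1 - t) • b) ≤ t * r + (1 - t) * qP b := EReal.coe_le_coe_iff.mp h3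
    have h5 : qP (t • c + (1 - t) • b)
        = t ^ 2 * qP c + t * (1 - t) * pairP c b + (1 - t) ^ 2 * qP b := by
      simp only [qP, pairP, Prod.fst_add, Prod.snd_add, Prod.smul_fst, Prod.smul_snd,
        ContinuousLinearMap.add_apply, ContinuousLinearMap.smul_apply, map_add, map_smul,
        smul_eq_mul]
      ring
    rw [h5] at h4
    have h6 : t * (t * qP c + (1 - t) * pairP c b - r - (1 - t) * qP b) ≤ 0 := by nlinarith
    have h7 : t * qP c + (1 - t) * pairP c b - r - (1 - t) * qP b ≤ 0 := by
      by_contra hcon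
      push_neg at hcon
      nlinarith [mul_pos ht0 hcon]
    linarith
  by_contra hY
  push_neg at hY
  set Y : ℝ := pairP c b - qP b - r with hYdef
  set M : ℝ := pairP c b - qP b - qP c with hMdef
  have hY' : 0 < Y := by rw [hYdef]; linarith
  set t : ℝ := min (Y / (2 * (|M| + 1))) (1 / 2) with htdef
  have habs0 : (0:ℝ) ≤ |M| := abs_nonneg M
  have ht0 : 0 < t := lt_min (by positivity) one_half_pos
  have ht1 : t < 1 := lt_of_le_of_lt (min_le_right _ _) (by norm_num)
  have h8 : Y ≤ t * M := step t ht0 ht1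
  have hT : t * (2 * (|M| + 1)) ≤ Y := by
    have := min_le_left (Y / (2 * (|M| + 1))) (1 / 2)
    rw [← htdef] at this
    rw [← le_div_iff₀ (by positivity)]
    exact this
  nlinarith [mul_le_mul_of_nonneg_left (le_abs_self M) ht0.le]

lemma conj_le (f : E × StrongDual ℝ E → EReal) (hproper : ProperFnP f)
    (hq : ∀ p, ((qP p : ℝ) : EReal) ≤ f p) (hconv : ConvexFnP f)
    {b : E × StrongDual ℝ E} (hb : f b = ((qP b : ℝ) : EReal)) :
    conjP f b ≤ ((qP b : ℝ) : EReal) := by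
  refine iSup_le fun c => ?_
  rcases eq_or_ne (f c) ⊤ with h | h
  · rw [h, EReal.sub_top]; exact bot_le
  · have hco : f c = (((f c).toReal : ℝ) : EReal) := (EReal.coe_toReal h (hproper.1 c)).symm
    rw [hco, ← EReal.coe_sub, EReal.coe_le_coe_iff]
    have := keyIneq f hq hconv hb c (f c).toReal hco
    linarith
set_option maxHeartbeats 2000000 in
lemma core [CompleteSpace E] [Nontrivial E] (hrefl : ReflexiveSp E)
    (f : E × StrongDual ℝ E → EReal)
    (hproper : ProperFnP f) (hconv : ConvexFnP f) (hbc : IsBCP f)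
    (b : E × StrongDual ℝ E) :
    ∃ a : E × StrongDual ℝ E, f a = ((qP a : ℝ) : EReal) ∧
      (1 / 2) * ‖a.1 - b.1‖ ^ 2 + (1 / 2) * ‖a.2 - b.2‖ ^ 2 = -((a.2 - b.2) (a.1 - b.1)) := by
  classical
  set g0 : E × StrongDual ℝ E → ℝ :=
    fun d => (1 / 2) * ‖d.1‖ ^ 2 + (1 / 2) * ‖d.2‖ ^ 2 with hg0def
  set M : E × StrongDual ℝ E → ℝ :=
    fun e => pairP e b - qP b - g0 (e - b) with hMdef
  set S : Set ((E × StrongDual ℝ E) × ℝ) := {p | p.2 < M p.1} with hSdef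
  set T : Set ((E × StrongDual ℝ E) × ℝ) := {p | f p.1 ≤ (p.2 : EReal)} with hTdef
  -- concavity of M
  have hMconc : ∀ (x y : E × StrongDual ℝ E) (a a' : ℝ), 0 ≤ a → 0 ≤ a' → a + a' = 1 →
      a * M x + a' * M y ≤ M (a • x + a' • y) := by
    intro x y a a' ha ha' hab
    have hlin : pairP (a • x + a' • y) b = a * pairP x b + a' * pairP y b := by
      simp only [pairP, Prod.fst_add, Prod.snd_add, Prod.smul_fst, Prod.smul_snd,
        ContinuousLinearMap.add_apply, ContinuousLinearMap.smul_apply, map_add, map_smul,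
        smul_eq_mul]
      ring
    have hb1 : b.1 = a • b.1 + a' • b.1 := by rw [← add_smul, hab, one_smul]
    have hb2 : b.2 = a • b.2 + a' • b.2 := by rw [← add_smul, hab, one_smul]
    have htr1 : a • x.1 + a' • y.1 - b.1 = a • (x.1 - b.1) + a' • (y.1 - b.1) := by
      rw [smul_sub, smul_sub]
      conv_lhs => rw [hb1]
      abel
    have htr2 : a • x.2 + a' • y.2 - b.2 = a • (x.2 - b.2) + a' • (y.2 - b.2) := by
      rw [smul_sub, smul_sub]
      conv_lhs => rw [hb2]
      abel
    have hn1 := normsq_combo (x.1 - b.1) (y.1 - b.1) ha ha' hab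
    have hn2 := normsq_combo (x.2 - b.2) (y.2 - b.2) ha ha' hab
    have hg : g0 (a • x + a' • y - b) ≤ a * g0 (x - b) + a' * g0 (y - b) := by
      simp only [hg0def, Prod.fst_sub, Prod.snd_sub, Prod.fst_add, Prod.snd_add,
        Prod.smul_fst, Prod.smul_snd]
      rw [htr1, htr2]
      linarith
    have hqb : a * qP b + a' * qP b = qP b := by rw [← add_mul, hab, one_mul]
    simp only [hMdef]
    rw [hlin]
    linarith [hg]
  -- convexity of S
  have hSconv : Convex ℝ S := by
    rintro p hp q hq a a' ha ha' hab
    simp only [hSdef, Set.mem_setOf_eq] at hp hq ⊢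
    have h2 : (a • p + a' • q).2 = a * p.2 + a' * q.2 := rfl
    have h1 : (a • p + a' • q).1 = a • p.1 + a' • q.1 := rfl
    rw [h1, h2]
    have hcomb := hMconc p.1 q.1 a a' ha ha' hab
    rcases lt_or_eq_of_le ha with ha0 | ha0
    · have m1 := mul_lt_mul_of_pos_left hp ha0
      have m2 := mul_le_mul_of_nonneg_left hq.le ha'
      linarith
    · have ha1 : a' = 1 := by linarith
      rw [← ha0, ha1]
      simp only [zero_mul, one_mul, zero_smul, zero_add, one_smul]
      exact hq
  -- openness of S
  have hcont : Continuous fun p : (E × StrongDual ℝ E) × ℝ => M p.1 - p.2 := by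
    have c1 : Continuous fun p : (E × StrongDual ℝ E) × ℝ => pairP p.1 b := by
      have ca : Continuous fun p : (E × StrongDual ℝ E) × ℝ => b.2 p.1.1 :=
        b.2.continuous.comp (continuous_fst.fst)
      have cb : Continuous fun p : (E × StrongDual ℝ E) × ℝ => p.1.2 b.1 :=
        (NormedSpace.inclusionInDoubleDual ℝ E b.1).continuous.comp (continuous_fst.snd)
      exact ca.add cb
    have c2 : Continuous fun p : (E × StrongDual ℝ E) × ℝ => g0 (p.1 - b) := by
      have n1 : Continuous fun p : (E × StrongDual ℝ E) × ℝ => ‖p.1.1 - b.1‖ :=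
        (continuous_fst.fst.sub continuous_const).norm
      have n2 : Continuous fun p : (E × StrongDual ℝ E) × ℝ => ‖p.1.2 - b.2‖ :=
        (continuous_fst.snd.sub continuous_const).norm
      exact (continuous_const.mul (n1.pow 2)).add (continuous_const.mul (n2.pow 2))
    exact ((c1.sub continuous_const).sub c2).sub continuous_snd
  have hSopen : IsOpen S := by
    have hset : S = (fun p : (E × StrongDual ℝ E) × ℝ => M p.1 - p.2) ⁻¹' Set.Ioi 0 := by
      ext p
      simp only [hSdef, Set.mem_setOf_eq, Set.mem_preimage, Set.mem_Ioi, sub_pos]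
    rw [hset]
    exact isOpen_Ioi.preimage hcont
  -- convexity of T
  have hTconv : Convex ℝ T := by
    rintro p hp q hq a a' ha ha' hab
    simp only [hTdef, Set.mem_setOf_eq] at hp hq ⊢
    have h1 : (a • p + a' • q).1 = a • p.1 + a' • q.1 := rfl
    have h2 : (a • p + a' • q).2 = a * p.2 + a' * q.2 := rfl
    rw [h1, h2]
    have ha'' : a' = 1 - a := by linarith
    subst ha''
    have hcv := hconv p.1 q.1 a ha (by linarith)
    refine le_trans hcv ?_
    have m1 : (a : EReal) * f p.1 ≤ (a : EReal) * (p.2 : EReal) :=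
      mul_le_mul_of_nonneg_left hp (by exact_mod_cast ha)
    have m2 : ((1 - a : ℝ) : EReal) * f q.1 ≤ ((1 - a : ℝ) : EReal) * (q.2 : EReal) :=
      mul_le_mul_of_nonneg_left hq (by exact_mod_cast (by linarith : (0:ℝ) ≤ 1 - a))
    refine le_trans (add_le_add m1 m2) ?_
    rw [← EReal.coe_mul, ← EReal.coe_mul, ← EReal.coe_add]
  -- disjointness
  have hdisj : Disjoint S T := by
    rw [Set.disjoint_left]
    rintro p hpS hpT
    simp only [hSdef, hTdef, Set.mem_setOf_eq] at hpS hpT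
    have hM : M p.1 ≤ qP p.1 := by
      have h := amgm (p.1 - b)
      simp only [Prod.fst_sub, Prod.snd_sub, ContinuousLinearMap.sub_apply, map_sub] at h
      simp only [hMdef, hg0def, pairP, qP, Prod.fst_sub, Prod.snd_sub]
      linarith
    have h3 : qP p.1 ≤ p.2 := EReal.coe_le_coe_iff.mp (le_trans (hbc p.1).1 hpT)
    linarith
  -- Hahn-Banach separation
  obtain ⟨φ, u, hSφ, hTφ⟩ := geometric_hahn_banach_open hSconv hSopen hTconv hdisj
  set s : ℝ := φ (0, 1) with hsdef
  have hφ : ∀ (e : E × StrongDual ℝ E) (t : ℝ), φ (e, t) = φ (e, 0) + t * s := by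
    intro e t
    have hsplit : ((e, t) : (E × StrongDual ℝ E) × ℝ)
        = (e, 0) + t • ((0 : E × StrongDual ℝ E), (1 : ℝ)) := by
      simp [Prod.ext_iff]
    rw [hsplit, map_add, map_smul, smul_eq_mul, hsdef]
  obtain ⟨e₀, he₀⟩ := hproper.2
  set r₀ : ℝ := (f e₀).toReal with hr₀def
  have hfe₀ : f e₀ = (r₀ : EReal) := (EReal.coe_toReal he₀ (hproper.1 e₀)).symm
  have hTmem : ∀ r : ℝ, r₀ ≤ r → u ≤ φ (e₀, 0) + r * s := by
    intro r hr
    have hmem : ((e₀, r) : (E × StrongDual ℝ E) × ℝ) ∈ T := by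
      simp only [hTdef, Set.mem_setOf_eq]
      rw [hfe₀]
      exact_mod_cast hr
    have := hTφ _ hmem
    rwa [hφ] at this
  have hs0 : 0 ≤ s := by
    by_contra hs
    push_neg at hs
    obtain ⟨n, hn⟩ := exists_nat_gt ((φ (e₀, 0) + r₀ * s - u) / (-s))
    have h1 := hTmem (r₀ + n) (by linarith [Nat.cast_nonneg (α := ℝ) n])
    rw [div_lt_iff₀ (by linarith : (0:ℝ) < -s)] at hn
    nlinarith
  have hsne : s ≠ 0 := by
    intro h0
    have h1 := hTmem r₀ le_rfl
    have h2 : ((e₀, M e₀ - 1) : (E × StrongDual ℝ E) × ℝ) ∈ S := by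
      simp only [hSdef, Set.mem_setOf_eq]
      linarith
    have h3 := hSφ _ h2
    rw [hφ, h0] at h3
    rw [h0] at h1
    simp only [mul_zero] at h1 h3
    linarith
  have hspos : 0 < s := lt_of_le_of_ne hs0 (Ne.symm hsne)
  -- decompose the functional
  set φ₀ : (E × StrongDual ℝ E) →L[ℝ] ℝ :=
    φ.comp (ContinuousLinearMap.inl ℝ (E × StrongDual ℝ E) ℝ) with hφ₀def
  have hφ₀ : ∀ e : E × StrongDual ℝ E, φ₀ e = φ (e, 0) := fun e => rfl
  set ψ₁ : StrongDual ℝ E :=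
    φ₀.comp (ContinuousLinearMap.inl ℝ E (StrongDual ℝ E)) with hψ₁def
  obtain ⟨w, hw⟩ := hrefl (φ₀.comp (ContinuousLinearMap.inr ℝ E (StrongDual ℝ E)))
  have hw' : ∀ y : StrongDual ℝ E, y w = φ₀ (0, y) := by
    intro y
    have h1 := congrArg (fun F : StrongDual ℝ (StrongDual ℝ E) => F y) hw
    simpa [NormedSpace.dual_def] using h1
  have hdec : ∀ e : E × StrongDual ℝ E, φ₀ e = ψ₁ e.1 + e.2 w := by
    intro e
    have he : ((e.1, 0) : E × StrongDual ℝ E) + (0, e.2) = e := by simp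
    have h1 := congrArg φ₀ he.symm
    rw [map_add] at h1
    rw [h1, hw' e.2]
    rfl
  set c' : E × StrongDual ℝ E := ((-s⁻¹) • w, (-s⁻¹) • ψ₁) with hc'def
  have hpair : ∀ e : E × StrongDual ℝ E, pairP e c' = -s⁻¹ * φ₀ e := by
    intro e
    simp only [pairP, hc'def, ContinuousLinearMap.smul_apply, map_smul, smul_eq_mul]
    rw [hdec e]
    ring
  have hφ₀s : ∀ e : E × StrongDual ℝ E, φ₀ e = -s * pairP e c' := by
    intro e
    rw [hpair e]
    field_simp
  -- conclusion (A): conjP f c' ≤ -(u/s)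
  have hA : conjP f c' ≤ ((-(u / s) : ℝ) : EReal) := by
    refine iSup_le fun e => ?_
    rcases eq_or_ne (f e) ⊤ with h | h
    · rw [h, EReal.sub_top]
      exact bot_le
    · have hre : f e = (((f e).toReal : ℝ) : EReal) := (EReal.coe_toReal h (hproper.1 e)).symm
      have hmem : ((e, (f e).toReal) : (E × StrongDual ℝ E) × ℝ) ∈ T := by
        simp only [hTdef, Set.mem_setOf_eq]
        exact le_of_eq hre
      have h1 := hTφ _ hmem
      rw [hφ, ← hφ₀ e, hφ₀s e] at h1
      have h2 : pairP e c' - (f e).toReal ≤ -(u / s) := by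
        have hx : (pairP e c' - (f e).toReal) * s ≤ -u := by nlinarith
        calc pairP e c' - (f e).toReal = (pairP e c' - (f e).toReal) * s / s := by field_simp
          _ ≤ -u / s := by gcongr
          _ = -(u / s) := by rw [neg_div]
      rw [hre, ← EReal.coe_sub]
      exact_mod_cast h2
  -- conclusion (B)
  have hH2 : ∀ e : E × StrongDual ℝ E, φ₀ e + M e * s ≤ u := by
    intro e
    by_contra hcon
    push_neg at hcon
    set t : ℝ := M e - (φ₀ e + M e * s - u) / (2 * s) with htdef
    have hgap : 0 < (φ₀ e + M e * s - u) / (2 * s) := div_pos (by linarith) (by linarith)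
    have hmem : ((e, t) : (E × StrongDual ℝ E) × ℝ) ∈ S := by
      simp only [hSdef, Set.mem_setOf_eq, htdef]
      linarith
    have h1 := hSφ _ hmem
    rw [hφ, ← hφ₀ e] at h1
    have ht2 : (φ₀ e + M e * s - u) / (2 * s) * s = (φ₀ e + M e * s - u) / 2 := by
      field_simp
    have hexp : t * s = M e * s - (φ₀ e + M e * s - u) / 2 := by
      rw [htdef, sub_mul, ht2]
    rw [hexp] at h1
    linarith
  have hB : ∀ d : E × StrongDual ℝ E,
      (c' - b).2 d.1 + d.2 (c' - b).1 - ((1 / 2) * ‖d.1‖ ^ 2 + (1 / 2) * ‖d.2‖ ^ 2)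
        ≤ u / s + pairP b c' - qP b := by
    intro d
    have h1 := hH2 (b - d)
    rw [hφ₀s] at h1
    have h2 : -pairP (b - d) c' + M (b - d) ≤ u / s := by
      rw [le_div_iff₀ hspos]
      nlinarith
    have hsub : b - d - b = -d := by abel
    simp only [hMdef, hg0def] at h2
    rw [hsub] at h2
    simp only [pairP, qP, Prod.fst_sub, Prod.snd_sub, Prod.fst_neg, Prod.snd_neg, norm_neg,
      ContinuousLinearMap.sub_apply, ContinuousLinearMap.neg_apply, map_sub, map_neg] at h2 ⊢
    linarith
  have hg0c : (1 / 2) * ‖(c' - b).1‖ ^ 2 + (1 / 2) * ‖(c' - b).2‖ ^ 2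
      ≤ u / s + pairP b c' - qP b := sup_est (c' - b) _ hB
  -- conclusion (C)
  have hC : qP c' ≤ -(u / s) := by
    have h1 := le_trans (hbc c').1 (le_trans (hbc c').2 hA)
    exact_mod_cast h1
  -- final algebra
  have hamgm := amgm (c' - b)
  simp only [Prod.fst_sub, Prod.snd_sub, ContinuousLinearMap.sub_apply, map_sub] at hamgm
  simp only [Prod.fst_sub, Prod.snd_sub] at hg0c
  have hqc : qP c' = -(u / s) := by
    simp only [pairP, qP] at hg0c hC ⊢
    linarith
  refine ⟨c', ?_, ?_⟩
  · refine le_antisymm ?_ (hbc c').1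
    have hcast : ((-(u / s) : ℝ) : EReal) = ((qP c' : ℝ) : EReal) := by rw [hqc]
    rw [← hcast]
    exact le_trans (hbc c').2 hA
  · simp only [ContinuousLinearMap.sub_apply, map_sub]
    simp only [pairP, qP] at hg0c hC hqc
    linarith

end Stmt12Aux


/-- if `E` is a nonzero reflexive Banach space and `f ∈ PC(E × E*)` is a
BC-function, then `P_q(f)` is maximally monotone, `P_q(f^@) = P_q(f)` and
`P_q(f) - G(-J) = E × E*`. -/
theorem stmt12 [CompleteSpace E] [Nontrivial E] (hrefl : ReflexiveSp E)
    (f : E × StrongDual ℝ E → EReal)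
    (hproper : ProperFnP f) (hconv : ConvexFnP f) (hbc : IsBCP f) :
    MaxMono (PqP f) ∧ PqP (conjP f) = PqP f ∧
      PqP f - GnegJ E = (Set.univ : Set (E × StrongDual ℝ E)) := by
  have hq : ∀ p : E × StrongDual ℝ E, ((qP p : ℝ) : EReal) ≤ f p := fun p => (hbc p).1
  have hcore := Stmt12Aux.core hrefl f hproper hconv hbc
  refine ⟨⟨?_, ?_, ?_⟩, ?_, ?_⟩
  · obtain ⟨a, ha, -⟩ := hcore 0
    exact ⟨a, ha⟩
  · intro p hp r hr
    have hkey := Stmt12Aux.keyIneq f hq hconv hr p (qP p) hp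
    have hexp : (p.2 - r.2) (p.1 - r.1) = p.2 p.1 - p.2 r.1 - r.2 p.1 + r.2 r.1 := by
      simp only [ContinuousLinearMap.sub_apply, map_sub]
      ring
    rw [hexp]
    simp only [pairP, qP] at hkey
    linarith
  · intro C hC hsub
    refine Set.Subset.antisymm ?_ hsub
    intro p hpC
    obtain ⟨a, ha, hg⟩ := hcore p
    have hmono := hC a (hsub ha) p hpC
    have hx1 : ‖a.1 - p.1‖ ^ 2 = 0 :=
      le_antisymm (by nlinarith [sq_nonneg ‖a.2 - p.2‖]) (sq_nonneg _)
    have hx2 : ‖a.2 - p.2‖ ^ 2 = 0 :=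
      le_antisymm (by nlinarith [sq_nonneg ‖a.1 - p.1‖]) (sq_nonneg _)
    have h1' : a.1 = p.1 := by
      have := norm_eq_zero.mp (pow_eq_zero_iff (n := 2) (by norm_num) |>.mp hx1)
      exact sub_eq_zero.mp this
    have h2' : a.2 = p.2 := by
      have := norm_eq_zero.mp (pow_eq_zero_iff (n := 2) (by norm_num) |>.mp hx2)
      exact sub_eq_zero.mp this
    have hap : a = p := Prod.ext h1' h2'
    rwa [← hap]
  · ext p
    simp only [PqP, Set.mem_setOf_eq]
    constructor
    · intro h
      exact le_antisymm (le_trans (hbc p).2 (le_of_eq h)) (hq p)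
    · intro h
      exact le_antisymm (Stmt12Aux.conj_le f hproper hq hconv h)
        (le_trans (hq p) (hbc p).2)
  · ext p
    simp only [Set.mem_univ, iff_true]
    obtain ⟨a, ha, hg⟩ := hcore p
    rw [Set.mem_sub]
    refine ⟨a, ha, a - p, ?_, by abel⟩
    simpa only [GnegJ, Set.mem_setOf_eq, Prod.fst_sub, Prod.snd_sub] using hg
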